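/- Let G be a compactly generated t.d.l.c. group acting faithfully on a geometric G-set X equipped with a G-metric, and suppose (K,U) is a TMS pair of G for some compact open subgroup U such that ⋂_{g ∈ G} gUg^{-1} = {1}. Then for all sufficiently large r ≥ 0, the set X^{K,r} of points x ∈ X such that K fixes pointwise the ball of radius r around x is an almost separated subset of X, and both X^{K,r} and X \ X^{K,r} are infinite. Moreover, if X = G/V for some open subgroup V ≤ U (with the natural left G-action), then this conclusion holds for every r ≥ 0. -/

import Mathlib

set_option linter.unusedSectionVars false
set_option maxHeartbeats 1000000

open scoped Pointwise

section Prelim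

variable (G : Type*) [Group G] [TopologicalSpace G]

/-- A topological group is compactly generated if it is generated by a compact subset. -/
def CompactlyGeneratedGrp : Prop := ∃ S : Set G, IsCompact S ∧ Subgroup.closure S = ⊤

/-- G has no nontrivial compact normal subgroup. -/
def NoCompactNormal : Prop :=
  ∀ N : Subgroup G, N.Normal → IsCompact (N : Set G) → N = ⊥

variable {G}

/-- (K,U) is a TMS pair of G. -/
def IsTMSPair (K U : Subgroup G) : Prop :=
  IsCompact (U : Set G) ∧ IsOpen (U : Set G) ∧
  (∀ N : Subgroup G, N.Normal → IsCompact (N : Set G) → ∀ h : G,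
    IsCompact (closure {g : G | (∀ k ∈ K, g * k * g⁻¹ ∈ (U : Set G) * (N : Set G)) ∧
      ¬ ∀ k ∈ K, g * k * g⁻¹ ∈ (fun x => h * x * h⁻¹) '' (U : Set G)})) ∧
  (¬ IsCompact (closure {g : G | ∀ k ∈ K, g * k * g⁻¹ ∈ (U : Set G)})) ∧
  (∀ N : Subgroup G, N.Normal → IsCompact (N : Set G) → N.relIndex K = 0)

/-- K is a TMS subgroup of G. -/
def IsTMSSubgroup (K : Subgroup G) : Prop := ∃ U : Subgroup G, IsTMSPair K U

/-- g belongs to the quasi-centre of G, i.e. has open centraliser. -/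
def InQuasiCentre (g : G) : Prop :=
  IsOpen ((Subgroup.centralizer {g} : Subgroup G) : Set G)

/-- A subgroup is locally normal if its normaliser is open. -/
def IsLocallyNormal (H : Subgroup G) : Prop := IsOpen ((Subgroup.normalizer (H : Set G) : Subgroup G) : Set G)

variable (G)

/-- G is [A]-semisimple: trivial quasi-centre and no nontrivial abelian locally normal
subgroup. -/
def ASemisimple : Prop :=
  (∀ g : G, InQuasiCentre g → g = 1) ∧
  (∀ H : Subgroup G, IsLocallyNormal H → (∀ a ∈ H, ∀ b ∈ H, a * b = b * a) → H = ⊥)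

variable {G}

/-- A compact open subgroup U is of finite quotient type if for each n ≥ 1 it has only
finitely many open normal subgroups of index n. -/
def FiniteQuotientType (U : Subgroup G) : Prop :=
  ∀ n : ℕ, 0 < n →
    {N : Subgroup G | N ≤ U ∧ IsOpen (N : Set G) ∧ (∀ u ∈ U, ∀ x ∈ N, u * x * u⁻¹ ∈ N) ∧
      N.relIndex U = n}.Finite

variable (G)

/-- G is locally of finite quotient type. -/
def LocallyFiniteQuotientType : Prop :=
  ∀ U : Subgroup G, IsCompact (U : Set G) → IsOpen (U : Set G) → FiniteQuotientType U

variable {G}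

/-- K is a local direct factor of G: a closed subgroup such that some open subgroup of G
splits as a topological direct product K × L. -/
def LocalDirectFactor (K : Subgroup G) : Prop :=
  IsClosed (K : Set G) ∧
  ∃ L O : Subgroup G, IsClosed (L : Set G) ∧ IsOpen (O : Set G) ∧ K ≤ O ∧ L ≤ O ∧
    K ⊓ L = ⊥ ∧ (∀ k ∈ K, ∀ l ∈ L, k * l = l * k) ∧ (K : Set G) * (L : Set G) = (O : Set G)

end Prelim

section MetricActions

variable {G : Type*} [Group G] [TopologicalSpace G] {X : Type*} [MetricSpace X]

/-- The action is by isometries. -/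
def IsometricAction (φ : G →* Equiv.Perm X) : Prop :=
  ∀ (g : G) (x y : X), dist (φ g x) (φ g y) = dist x y

/-- The action is proper: for every point and bound, the set of elements moving the point
less than the bound is an identity neighbourhood with compact closure. -/
def ProperMetricAction (φ : G →* Equiv.Perm X) : Prop :=
  ∀ (x : X) (n : ℝ), 0 < n → {g : G | dist x (φ g x) < n} ∈ nhds (1 : G) ∧
    IsCompact (closure {g : G | dist x (φ g x) < n})

/-- The action is cocompact. -/
def CocompactMetricAction (φ : G →* Equiv.Perm X) : Prop :=
  ∃ n : ℝ, ∀ x y : X, ∃ g : G, dist x (φ g y) < n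

/-- X is a geometric G-set: compact open point stabilisers and finitely many orbits. -/
def GeometricGSet (φ : G →* Equiv.Perm X) : Prop :=
  (∀ x : X, IsCompact {g : G | φ g x = x} ∧ IsOpen {g : G | φ g x = x}) ∧
  ∃ s : Set X, s.Finite ∧ ∀ x : X, ∃ y ∈ s, ∃ g : G, φ g y = x

/-- A subset of a metric space is almost separated if for every d, the set of points
outside A at distance at most d from A is bounded. -/
def MetricAlmostSep (A : Set X) : Prop :=
  ∀ d : ℝ, Bornology.IsBounded {p : X | p ∉ A ∧ ∃ q ∈ A, dist p q ≤ d}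

end MetricActions

/-- Two metric spaces are quasi-isometric. -/
def QuasiIsometric (X Y : Type*) [MetricSpace X] [MetricSpace Y] : Prop :=
  ∃ (L C : ℝ) (f : X → Y), 1 ≤ L ∧ 0 ≤ C ∧
    (∀ x x' : X, L⁻¹ * dist x x' - C ≤ dist (f x) (f x') ∧
      dist (f x) (f x') ≤ L * dist x x' + C) ∧
    (∀ y : Y, ∃ x : X, dist y (f x) ≤ C)

section TMSHelpers
variable {G : Type*} [Group G] [TopologicalSpace G] [IsTopologicalGroup G] [T2Space G]

lemma TMS.mem_conj_image (U : Subgroup G) (h y : G) :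
    y ∈ (fun x => h * x * h⁻¹) '' (U : Set G) ↔ h⁻¹ * y * h ∈ U := by
  constructor
  · rintro ⟨u, hu, rfl⟩
    have : h⁻¹ * (h * u * h⁻¹) * h = u := by group
    rw [this]; exact hu
  · intro hy
    exact ⟨h⁻¹ * y * h, hy, by group⟩

lemma TMS.finite_core (U : Subgroup G) (hUc : IsCompact (U : Set G))
    (hcore : ∀ x : G, (∀ g : G, g⁻¹ * x * g ∈ U) → x = 1)
    {W : Set G} (hW : IsOpen W) (h1W : (1 : G) ∈ W) :
    ∃ T : Finset G, ∀ x : G, (∀ t ∈ T, t⁻¹ * x * t ∈ U) → x ∈ W := by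
  have hC : IsCompact ((U : Set G) ∩ Wᶜ) := hUc.inter_right hW.isClosed_compl
  have hZc : ∀ t : G, IsClosed {x : G | t⁻¹ * x * t ∈ U} := by
    intro t
    have : {x : G | t⁻¹ * x * t ∈ U} = (fun x => t⁻¹ * x * t) ⁻¹' (U : Set G) := rfl
    rw [this]
    exact IsClosed.preimage (by fun_prop) hUc.isClosed
  have hempty : ((U : Set G) ∩ Wᶜ) ∩ ⋂ t : G, {x : G | t⁻¹ * x * t ∈ U} = ∅ := by
    ext x
    simp only [Set.mem_inter_iff, Set.mem_iInter, Set.mem_empty_iff_false, iff_false, not_and,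
      Set.mem_compl_iff, Set.mem_setOf_eq, and_imp]
    intro _ hxW hall
    exact hxW (by rw [hcore x hall]; exact h1W)
  classical
  obtain ⟨T, hT⟩ := hC.elim_finite_subfamily_closed _ hZc hempty
  refine ⟨insert 1 T, fun x hx => ?_⟩
  by_contra hxW
  have hxU : x ∈ (U : Set G) := by
    have := hx 1 (Finset.mem_insert_self 1 T); simpa using this
  have hmem : x ∈ ((U : Set G) ∩ Wᶜ) ∩ ⋂ t ∈ T, {x : G | t⁻¹ * x * t ∈ U} :=
    ⟨⟨hxU, hxW⟩, Set.mem_iInter₂.2 fun t ht => hx t (Finset.mem_insert_of_mem ht)⟩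
  rw [hT] at hmem
  exact hmem

lemma TMS.conj_image_eq (U : Subgroup G) (h u : G) (hu : u ∈ U) :
    (fun x => (h * u) * x * (h * u)⁻¹) '' (U : Set G) = (fun x => h * x * h⁻¹) '' (U : Set G) := by
  ext y
  rw [TMS.mem_conj_image, TMS.mem_conj_image]
  constructor
  · intro hy
    have hrw : h⁻¹ * y * h = u * ((h * u)⁻¹ * y * (h * u)) * u⁻¹ := by group
    rw [hrw]; exact U.mul_mem (U.mul_mem hu hy) (U.inv_mem hu)
  · intro hy
    have hrw : (h * u)⁻¹ * y * (h * u) = u⁻¹ * (h⁻¹ * y * h) * u := by group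
    rw [hrw]; exact U.mul_mem (U.mul_mem (U.inv_mem hu) hy) hu

lemma TMS.coe_mul_bot (U : Subgroup G) :
    (U : Set G) * ((⊥ : Subgroup G) : Set G) = (U : Set G) := by
  rw [Subgroup.coe_bot]
  ext x
  constructor
  · rintro ⟨a, ha, b, hb, rfl⟩
    rw [Set.mem_singleton_iff] at hb
    subst hb; simpa using ha
  · intro hx
    exact ⟨x, hx, 1, rfl, mul_one x⟩



lemma TMS.D_compact {K U : Subgroup G} (hTMS : IsTMSPair K U) (t : G) :
    IsCompact (closure {g : G | (∀ k ∈ K, g * k * g⁻¹ ∈ (U : Set G)) ∧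
      ¬ ∀ k ∈ K, g * k * g⁻¹ ∈ (fun x => t * x * t⁻¹) '' (U : Set G)}) := by
  have hbot : IsCompact ((⊥ : Subgroup G) : Set G) := by
    rw [Subgroup.coe_bot]; exact isCompact_singleton
  have := hTMS.2.2.1 ⊥ inferInstance hbot t
  rwa [TMS.coe_mul_bot] at this

lemma TMS.noncompact_conj_into {K U : Subgroup G} (hTMS : IsTMSPair K U)
    (hcore : ∀ x : G, (∀ g : G, g⁻¹ * x * g ∈ U) → x = 1)
    (W : Subgroup G) (hW : IsOpen (W : Set G)) :
    ¬ IsCompact (closure {g : G | ∀ k ∈ K, g * k * g⁻¹ ∈ (W : Set G)}) := by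
  obtain ⟨T, hT⟩ := TMS.finite_core U hTMS.1 hcore hW W.one_mem
  intro hcpt
  apply hTMS.2.2.2.1
  set D : G → Set G := fun t => closure {g : G | (∀ k ∈ K, g * k * g⁻¹ ∈ (U : Set G)) ∧
    ¬ ∀ k ∈ K, g * k * g⁻¹ ∈ (fun x => t * x * t⁻¹) '' (U : Set G)} with hDdef
  have hD : ∀ t : G, IsCompact (D t) := fun t => TMS.D_compact hTMS t
  set R : Set G := closure {g : G | ∀ k ∈ K, g * k * g⁻¹ ∈ (W : Set G)} ∪ ⋃ t ∈ T, D t with hRdef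
  have hRc : IsCompact R :=
    hcpt.union (T.finite_toSet.isCompact_biUnion fun t _ => hD t)
  have hsub : {g : G | ∀ k ∈ K, g * k * g⁻¹ ∈ (U : Set G)} ⊆ R := by
    intro g hg
    by_cases hcase : ∀ t ∈ T, ∀ k ∈ K, g * k * g⁻¹ ∈ (fun x => t * x * t⁻¹) '' (U : Set G)
    · left
      apply subset_closure
      intro k hk
      apply hT
      intro t ht
      rw [← TMS.mem_conj_image U t]
      exact hcase t ht k hk
    · right
      push_neg at hcase
      obtain ⟨t, ht, hbad⟩ := hcase
      refine Set.mem_biUnion ht (subset_closure ⟨hg, ?_⟩)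
      intro hall
      obtain ⟨k, hk, hbad'⟩ := hbad
      exact hbad' (hall k hk)
  exact IsCompact.of_isClosed_subset hRc isClosed_closure
    (closure_minimal hsub (hcpt.isClosed.union
      (Set.Finite.isClosed_biUnion T.finite_toSet fun t _ => isClosed_closure)))

lemma TMS.bad_set_compact {K U : Subgroup G} (hTMS : IsTMSPair K U)
    {Q : Set G} (hQ : IsCompact Q) :
    IsCompact (closure {g : G | (∀ k ∈ K, g * k * g⁻¹ ∈ (U : Set G)) ∧
      ∃ h ∈ Q, ¬ ∀ k ∈ K, g * k * g⁻¹ ∈ (fun x => h * x * h⁻¹) '' (U : Set G)}) := by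
  have hcover : Q ⊆ ⋃ h : G, (fun x => h * x) '' (U : Set G) := by
    intro q _
    exact Set.mem_iUnion.2 ⟨q, 1, U.one_mem, mul_one q⟩
  have hopen : ∀ h : G, IsOpen ((fun x => h * x) '' (U : Set G)) := by
    intro h
    have : (fun x => h * x) '' (U : Set G) = (fun y => h⁻¹ * y) ⁻¹' (U : Set G) := by
      ext y
      constructor
      · rintro ⟨u, hu, rfl⟩; simpa using hu
      · intro hy; exact ⟨h⁻¹ * y, hy, by group⟩
    rw [this]
    exact hTMS.2.1.preimage (continuous_mul_left h⁻¹)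
  obtain ⟨T, hT⟩ := hQ.elim_finite_subcover _ hopen hcover
  have hsub : {g : G | (∀ k ∈ K, g * k * g⁻¹ ∈ (U : Set G)) ∧
      ∃ h ∈ Q, ¬ ∀ k ∈ K, g * k * g⁻¹ ∈ (fun x => h * x * h⁻¹) '' (U : Set G)} ⊆
      ⋃ t ∈ T, closure {g : G | (∀ k ∈ K, g * k * g⁻¹ ∈ (U : Set G)) ∧
        ¬ ∀ k ∈ K, g * k * g⁻¹ ∈ (fun x => t * x * t⁻¹) '' (U : Set G)} := by
    rintro g ⟨hgU, h, hhQ, hbad⟩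
    obtain ⟨t, ht, u, hu, huh⟩ : ∃ t ∈ T, ∃ u ∈ (U : Set G), t * u = h := by
      have := hT hhQ
      rw [Set.mem_iUnion₂] at this
      obtain ⟨t, ht, u, hu, huh⟩ := this
      exact ⟨t, ht, u, hu, huh⟩
    refine Set.mem_biUnion ht (subset_closure ⟨hgU, ?_⟩)
    intro hall
    apply hbad
    rw [← huh, TMS.conj_image_eq U t u hu]
    exact hall
  refine IsCompact.of_isClosed_subset ?_ isClosed_closure (closure_minimal hsub ?_)
  · exact T.finite_toSet.isCompact_biUnion fun t _ => TMS.D_compact hTMS t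
  · exact Set.Finite.isClosed_biUnion T.finite_toSet fun t _ => isClosed_closure

end TMSHelpers


section GeomHelpers
variable {G : Type*} [Group G] [TopologicalSpace G] [IsTopologicalGroup G] [T2Space G]
variable {X : Type*} [MetricSpace X] {φ : G →* Equiv.Perm X}

lemma TMS.phi_mul (φ : G →* Equiv.Perm X) (g h : G) (x : X) : φ (g * h) x = φ g (φ h x) := by
  rw [map_mul]; rfl

lemma TMS.phi_one (φ : G →* Equiv.Perm X) (x : X) : φ 1 x = x := by
  rw [map_one]; rfl

lemma TMS.phi_inv (φ : G →* Equiv.Perm X) (g : G) (x : X) : φ g⁻¹ (φ g x) = x := by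
  rw [← TMS.phi_mul, inv_mul_cancel, TMS.phi_one]

lemma TMS.phi_inv' (φ : G →* Equiv.Perm X) (g : G) (x : X) : φ g (φ g⁻¹ x) = x := by
  rw [← TMS.phi_mul, mul_inv_cancel, TMS.phi_one]

lemma TMS.moveSet_compact (hiso : IsometricAction φ) (hproper : ProperMetricAction φ)
    (x y : X) (d : ℝ) : IsCompact (closure {g : G | dist x (φ g y) ≤ d}) := by
  rcases Set.eq_empty_or_nonempty {g : G | dist x (φ g y) ≤ d} with he | ⟨g₀, hg₀⟩
  · rw [he, closure_empty]; exact isCompact_empty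
  · have hg₀' : dist x (φ g₀ y) ≤ d := hg₀
    have hd : (0 : ℝ) ≤ d := le_trans dist_nonneg hg₀'
    obtain ⟨-, hP⟩ := hproper x (2 * d + 1) (by linarith)
    have hsub : {g : G | dist x (φ g y) ≤ d} ⊆
        (fun h => h * g₀) '' closure {g : G | dist x (φ g x) < 2 * d + 1} := by
      intro g hg
      have hg' : dist x (φ g y) ≤ d := hg
      refine ⟨g * g₀⁻¹, subset_closure ?_, by group⟩
      have h2 : φ (g * g₀⁻¹) (φ g₀ y) = φ g y := by
        rw [← TMS.phi_mul]
        congr 1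
        group
      have h1 : dist (φ g y) (φ (g * g₀⁻¹) x) = dist (φ g₀ y) x := by
        conv_lhs => rw [← h2]
        exact hiso (g * g₀⁻¹) (φ g₀ y) x
      have : dist x (φ (g * g₀⁻¹) x) ≤ dist x (φ g y) + dist (φ g y) (φ (g * g₀⁻¹) x) :=
        dist_triangle _ _ _
      rw [h1, dist_comm (φ g₀ y) x] at this
      show dist x (φ (g * g₀⁻¹) x) < 2 * d + 1
      linarith
    have himg : IsCompact ((fun h => h * g₀) '' closure {g : G | dist x (φ g x) < 2 * d + 1}) :=
      hP.image (continuous_mul_right g₀)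
    exact IsCompact.of_isClosed_subset himg isClosed_closure
      (closure_minimal hsub himg.isClosed)

lemma TMS.image_compact_finite (hgeom : GeometricGSet φ) {Q : Set G} (hQ : IsCompact Q)
    (y : X) : ((fun g => φ g y) '' Q).Finite := by
  classical
  have hScov : Q ⊆ ⋃ g : G, (fun h => g * h) '' {h : G | φ h y = y} := by
    intro g _
    exact Set.mem_iUnion.2 ⟨g, 1, TMS.phi_one φ y, mul_one g⟩
  have hopen : ∀ g : G, IsOpen ((fun h => g * h) '' {h : G | φ h y = y}) := by
    intro g
    have : (fun h => g * h) '' {h : G | φ h y = y} = (fun a => g⁻¹ * a) ⁻¹' {h : G | φ h y = y} := by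
      ext a
      constructor
      · rintro ⟨h, hh, rfl⟩; simpa using hh
      · intro ha; exact ⟨g⁻¹ * a, ha, by group⟩
    rw [this]
    exact ((hgeom.1 y).2).preimage (continuous_mul_left g⁻¹)
  obtain ⟨T, hT⟩ := hQ.elim_finite_subcover _ hopen hScov
  apply Set.Finite.subset (T.image (fun g => φ g y)).finite_toSet
  rintro - ⟨a, haQ, rfl⟩
  have := hT haQ
  rw [Set.mem_iUnion₂] at this
  obtain ⟨g, hgT, h, hh, rfl⟩ := this
  show φ (g * h) y ∈ _
  have : φ (g * h) y = φ g y := by rw [TMS.phi_mul]; rw [hh]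
  rw [this]
  exact Finset.mem_coe.2 (Finset.mem_image_of_mem _ hgT)

lemma TMS.ball_finite (hiso : IsometricAction φ) (hproper : ProperMetricAction φ)
    (hgeom : GeometricGSet φ) (x : X) (r : ℝ) : {y : X | dist x y ≤ r}.Finite := by
  obtain ⟨hst, s, hsfin, hcov⟩ := hgeom
  have hsub : {y : X | dist x y ≤ r} ⊆
      ⋃ z ∈ s, (fun g : G => φ g z) '' closure {g : G | dist x (φ g z) ≤ r} := by
    intro y hy
    obtain ⟨z, hz, g, hg⟩ := hcov y
    refine Set.mem_biUnion hz ⟨g, subset_closure ?_, hg⟩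
    show dist x (φ g z) ≤ r
    rw [hg]; exact hy
  exact (Set.Finite.biUnion hsfin fun z _ =>
    TMS.image_compact_finite ⟨hst, s, hsfin, hcov⟩
      (TMS.moveSet_compact hiso hproper x z r) z).subset hsub

end GeomHelpers

section BallStab
variable {G : Type*} [Group G] [TopologicalSpace G] [IsTopologicalGroup G] [T2Space G]
variable {X : Type*} [MetricSpace X]

def ballStabSG (φ : G →* Equiv.Perm X) (x : X) (r : ℝ) : Subgroup G where
  carrier := {g : G | ∀ y : X, dist x y ≤ r → φ g y = y}
  one_mem' := fun y _ => TMS.phi_one φ y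
  mul_mem' := by
    intro a b ha hb y hy
    rw [TMS.phi_mul, hb y hy, ha y hy]
  inv_mem' := by
    intro a ha y hy
    have h1 : φ a⁻¹ (φ a y) = y := TMS.phi_inv φ a y
    rw [ha y hy] at h1
    exact h1

lemma mem_ballStabSG {φ : G →* Equiv.Perm X} {x : X} {r : ℝ} {g : G} :
    g ∈ ballStabSG φ x r ↔ ∀ y : X, dist x y ≤ r → φ g y = y := Iff.rfl

lemma ballStabSG_isOpen {φ : G →* Equiv.Perm X} (hiso : IsometricAction φ)
    (hproper : ProperMetricAction φ) (hgeom : GeometricGSet φ) (x : X) (r : ℝ) :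
    IsOpen ((ballStabSG φ x r : Subgroup G) : Set G) := by
  have : ((ballStabSG φ x r : Subgroup G) : Set G) =
      ⋂ y ∈ {y : X | dist x y ≤ r}, {g : G | φ g y = y} := by
    ext g
    simp only [Set.mem_iInter, Set.mem_setOf_eq]
    exact Iff.rfl
  rw [this]
  exact Set.Finite.isOpen_biInter (TMS.ball_finite hiso hproper hgeom x r)
    (fun y _ => (hgeom.1 y).2)

lemma ballStabSG_mono {φ : G →* Equiv.Perm X} {x : X} {r r' : ℝ} (h : r ≤ r') :
    ballStabSG φ x r' ≤ ballStabSG φ x r :=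
  fun g hg y hy => hg y (hy.trans h)

lemma exists_ballStabSG_le {φ : G →* Equiv.Perm X} (hfaith : Function.Injective φ)
    (hiso : IsometricAction φ) (hproper : ProperMetricAction φ) (hgeom : GeometricGSet φ)
    (U : Subgroup G) (hUo : IsOpen (U : Set G)) (x : X) :
    ∃ n : ℕ, ((ballStabSG φ x n : Subgroup G) : Set G) ⊆ (U : Set G) := by
  by_contra hno
  push_neg at hno
  set C : ℕ → Set G := fun n => ((ballStabSG φ x n : Subgroup G) : Set G) ∩ (U : Set G)ᶜ with hC
  have hCne : ∀ n : ℕ, (C n).Nonempty := by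
    intro n
    obtain ⟨g, hg, hgU⟩ := Set.not_subset.1 (hno n)
    exact ⟨g, hg, hgU⟩
  have hCdec : ∀ n : ℕ, C (n + 1) ⊆ C n := by
    intro n
    apply Set.inter_subset_inter_left
    intro g hg y hy
    exact hg y (hy.trans (by push_cast; linarith))
  have hCcl : ∀ n : ℕ, IsClosed (C n) :=
    fun n => ((Subgroup.isClosed_of_isOpen _ (ballStabSG_isOpen hiso hproper hgeom x n)).inter
      hUo.isClosed_compl)
  have hC0 : IsCompact (C 0) := by
    apply IsCompact.of_isClosed_subset (hgeom.1 x).1 (hCcl 0)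
    intro g hg
    exact hg.1 x (by rw [dist_self]; norm_num)
  obtain ⟨g, hg⟩ := IsCompact.nonempty_iInter_of_sequence_nonempty_isCompact_isClosed
    C hCdec hCne hC0 hCcl
  rw [Set.mem_iInter] at hg
  have hfix : ∀ y : X, φ g y = y := by
    intro y
    exact (hg ⌈dist x y⌉₊).1 y (Nat.le_ceil _)
  have : g = 1 := hfaith (by
    rw [map_one]
    exact Equiv.ext hfix)
  exact (hg 0).2 (by rw [this]; exact U.one_mem)

end BallStab


lemma TMS.main_core {G : Type*} [Group G] [TopologicalSpace G] [IsTopologicalGroup G] [T2Space G]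
    {X : Type*} [MetricSpace X] (φ : G →* Equiv.Perm X)
    (hfaith : Function.Injective φ)
    (hiso : IsometricAction φ) (hproper : ProperMetricAction φ) (hgeom : GeometricGSet φ)
    (K U : Subgroup G) (hTMS : IsTMSPair K U)
    (hcore : ∀ x : G, (∀ g : G, g⁻¹ * x * g ∈ U) → x = 1)
    (r : ℝ) (hr : 0 ≤ r)
    (s₀ : Set X) (hs₀ : s₀.Finite)
    (hH : ∀ q : X, (∀ k ∈ K, ∀ y : X, dist q y ≤ r → φ k y = y) →
      ∃ e : G, φ e q ∈ s₀ ∧ ∀ k ∈ K, e * k * e⁻¹ ∈ (U : Set G)) :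
    MetricAlmostSep {x : X | ∀ k ∈ K, ∀ y : X, dist x y ≤ r → φ k y = y} ∧
    {x : X | ∀ k ∈ K, ∀ y : X, dist x y ≤ r → φ k y = y}.Infinite ∧
    {x : X | ∀ k ∈ K, ∀ y : X, dist x y ≤ r → φ k y = y}ᶜ.Infinite := by
  classical
  set F : Set X := {x : X | ∀ k ∈ K, ∀ y : X, dist x y ≤ r → φ k y = y} with hFdef
  -- X is nonempty
  have hne : Nonempty X := by
    by_contra h
    have hX : IsEmpty X := not_nonempty_iff.1 h
    have hsub : Subsingleton G :=
      ⟨fun a b => hfaith (Equiv.ext fun x => (hX.false x).elim)⟩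
    exact hTMS.2.2.2.1 ((Set.subsingleton_of_subsingleton).finite.isCompact)
  obtain ⟨x₀⟩ := hne
  -- F is infinite
  have hFinf : F.Infinite := by
    by_contra hFfin
    rw [Set.not_infinite] at hFfin
    apply TMS.noncompact_conj_into hTMS hcore (ballStabSG φ x₀ r)
      (ballStabSG_isOpen hiso hproper hgeom x₀ r)
    set B : Set G := {g : G | ∀ k ∈ K, g * k * g⁻¹ ∈ ((ballStabSG φ x₀ r : Subgroup G) : Set G)}
      with hBdef
    have hmap : ∀ g ∈ B, φ g⁻¹ x₀ ∈ F := by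
      intro g hg k hk y hy
      have hd : dist x₀ (φ g y) ≤ r := by
        have : dist (φ g (φ g⁻¹ x₀)) (φ g y) = dist (φ g⁻¹ x₀) y := hiso g _ _
        rw [TMS.phi_inv' φ g x₀] at this
        rw [this]; exact hy
      have hfix : φ (g * k * g⁻¹) (φ g y) = φ g y := hg k hk (φ g y) hd
      have : φ (g * k * g⁻¹) (φ g y) = φ g (φ k y) := by
        rw [TMS.phi_mul φ (g*k) g⁻¹, TMS.phi_mul φ g k, TMS.phi_inv φ g y]
      rw [this] at hfix
      have := congrArg (φ g⁻¹) hfix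
      rwa [TMS.phi_inv φ g (φ k y), TMS.phi_inv φ g y] at this
    -- cover B by finitely many compact sets
    set g₀ : X → G := fun x => if h : ∃ g : G, φ g⁻¹ x₀ = x then h.choose else 1 with hg₀def
    set KS : X → Set G := fun x => (fun a => a * g₀ x) '' {h : G | φ h x₀ = x₀} with hKSdef
    have hKS : ∀ x : X, IsCompact (KS x) :=
      fun x => (hgeom.1 x₀).1.image (continuous_mul_right (g₀ x))
    have hBsub : B ⊆ ⋃ x ∈ F, KS x := by
      intro g hg
      have hgF : φ g⁻¹ x₀ ∈ F := hmap g hg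
      have hex : ∃ g' : G, φ g'⁻¹ x₀ = φ g⁻¹ x₀ := ⟨g, rfl⟩
      refine Set.mem_biUnion hgF ?_
      refine ⟨g * (g₀ (φ g⁻¹ x₀))⁻¹, ?_, by group⟩
      show φ (g * (g₀ (φ g⁻¹ x₀))⁻¹) x₀ = x₀
      have hspec : φ (g₀ (φ g⁻¹ x₀))⁻¹ x₀ = φ g⁻¹ x₀ := by
        rw [hg₀def]
        simp only [dif_pos hex]
        exact hex.choose_spec
      rw [TMS.phi_mul, hspec, TMS.phi_inv' φ g x₀]
    have hUc : IsCompact (⋃ x ∈ F, KS x) := hFfin.isCompact_biUnion fun x _ => hKS x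
    exact IsCompact.of_isClosed_subset hUc isClosed_closure
      (closure_minimal hBsub hUc.isClosed)
  -- complement of F is infinite
  have hFcinf : Fᶜ.Infinite := by
    by_contra hSfin
    rw [Set.not_infinite] at hSfin
    haveI := hSfin.to_subtype
    have hfixF : ∀ k ∈ K, ∀ x ∈ F, φ k x = x :=
      fun k hk x hx => hx k hk x (by rw [dist_self]; exact hr)
    have hmapS : ∀ k ∈ K, ∀ z : X, z ∈ Fᶜ → φ k z ∈ Fᶜ := by
      intro k hk z hz hmem
      apply hz
      have h1 : φ k (φ k z) = φ k z := hfixF k hk _ hmem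
      have h2 : φ k z = z := (φ k).injective h1
      rwa [← h2]
    set f : K → (↥(Fᶜ) → ↥(Fᶜ)) :=
      fun k z => ⟨φ (k : G) (z : X), hmapS k k.2 z z.2⟩ with hfdef
    have hfinj : Function.Injective f := by
      intro k k' hkk
      have : φ (k : G) = φ (k' : G) := by
        apply Equiv.ext
        intro x
        by_cases hx : x ∈ F
        · rw [hfixF k k.2 x hx, hfixF k' k'.2 x hx]
        · have := congrFun hkk ⟨x, hx⟩
          exact Subtype.ext_iff.1 this
      exact Subtype.ext (hfaith this)
    haveI : Finite K := Finite.of_injective f hfinj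
    have hcard : Nat.card K = 0 := by
      have hbot : IsCompact ((⊥ : Subgroup G) : Set G) := by
        rw [Subgroup.coe_bot]; exact isCompact_singleton
      have := hTMS.2.2.2.2 ⊥ inferInstance hbot
      rwa [Subgroup.relIndex_bot_left] at this
    have : 0 < Nat.card K := Nat.card_pos
    omega
  refine ⟨?_, hFinf, hFcinf⟩
  -- almost separated
  intro d
  rcases lt_or_ge d 0 with hd | hd
  · have hempty : {p : X | p ∉ F ∧ ∃ q ∈ F, dist p q ≤ d} = ∅ := by
      apply Set.eq_empty_iff_forall_notMem.2
      rintro p ⟨-, q, -, hq⟩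
      exact absurd (le_trans dist_nonneg hq) (not_le.2 hd)
    rw [hempty]
    exact Bornology.isBounded_empty
  · obtain ⟨hstab, s, hsfin, hcov⟩ := hgeom
    have hgeom' : GeometricGSet φ := ⟨hstab, s, hsfin, hcov⟩
    have hTch : ∀ y : X, ∃ T : Finset G,
        ∀ x : G, (∀ t ∈ T, t⁻¹ * x * t ∈ U) → x ∈ ((ballStabSG φ y r : Subgroup G) : Set G) :=
      fun y => TMS.finite_core U hTMS.1 hcore
        (ballStabSG_isOpen hiso hproper hgeom' y r) (ballStabSG φ y r).one_mem
    choose T hTspec using hTch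
    set Q : Set G := ⋃ z ∈ s₀, ⋃ y ∈ s, ⋃ t ∈ (↑(T y) : Set G),
        (fun a => a * t) '' closure {a : G | dist z (φ a y) ≤ d} with hQdef
    have hQc : IsCompact Q := by
      apply hs₀.isCompact_biUnion
      intro z _
      apply hsfin.isCompact_biUnion
      intro y _
      apply (T y).finite_toSet.isCompact_biUnion
      intro t _
      exact (TMS.moveSet_compact hiso hproper z y d).image (continuous_mul_right t)
    set ZC : Set G := closure {g : G | (∀ k ∈ K, g * k * g⁻¹ ∈ (U : Set G)) ∧
        ∃ h ∈ Q, ¬ ∀ k ∈ K, g * k * g⁻¹ ∈ (fun x => h * x * h⁻¹) '' (U : Set G)} with hZCdef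
    have hZCc : IsCompact ZC := TMS.bad_set_compact hTMS hQc
    set Y₀ : Set X := ⋃ z ∈ s₀, (fun g : G => φ g⁻¹ z) '' ZC with hY₀def
    have hY₀fin : Y₀.Finite := by
      apply hs₀.biUnion
      intro z _
      have hinv : IsCompact (ZC⁻¹) := hZCc.inv
      have heq : (fun g : G => φ g⁻¹ z) '' ZC = (fun g : G => φ g z) '' (ZC⁻¹) := by
        ext a
        constructor
        · rintro ⟨g, hg, rfl⟩
          exact ⟨g⁻¹, by rw [Set.mem_inv, inv_inv]; exact hg, rfl⟩
        · rintro ⟨g, hg, rfl⟩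
          exact ⟨g⁻¹, Set.mem_inv.1 hg, by show φ g⁻¹⁻¹ z = φ g z; rw [inv_inv]⟩
      rw [heq]
      exact TMS.image_compact_finite hgeom' hinv z
    have hsubδ : {p : X | p ∉ F ∧ ∃ q ∈ F, dist p q ≤ d} ⊆
        ⋃ q ∈ Y₀, Metric.closedBall q d := by
      rintro p ⟨hpF, q, hqF, hpq⟩
      obtain ⟨e, hez, heU⟩ := hH q hqF
      obtain ⟨y, hy, c, hcy⟩ := hcov p
      have hnotall : ¬ ∀ k ∈ K, c⁻¹ * k * c ∈ ballStabSG φ y r := by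
        intro hall
        apply hpF
        intro k hk w hw
        have h1 : dist y (φ c⁻¹ w) = dist p w := by
          have h0 := hiso c y (φ c⁻¹ w)
          rw [TMS.phi_inv' φ c w, hcy] at h0
          exact h0.symm
        have h2 : φ (c⁻¹ * k * c) (φ c⁻¹ w) = φ c⁻¹ w :=
          hall k hk (φ c⁻¹ w) (by rw [h1]; exact hw)
        have h3 : φ (c⁻¹ * k * c) (φ c⁻¹ w) = φ c⁻¹ (φ k w) := by
          rw [TMS.phi_mul φ (c⁻¹ * k) c, TMS.phi_inv' φ c w, TMS.phi_mul φ c⁻¹ k]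
        rw [h3] at h2
        have h4 := congrArg (φ c) h2
        rwa [TMS.phi_inv' φ c (φ k w), TMS.phi_inv' φ c w] at h4
      push_neg at hnotall
      obtain ⟨k₀, hk₀, hk₀not⟩ := hnotall
      have hTnot : ¬ ∀ t ∈ T y, t⁻¹ * (c⁻¹ * k₀ * c) * t ∈ U :=
        fun hall => hk₀not (hTspec y _ hall)
      push_neg at hTnot
      obtain ⟨t, htT, htnot⟩ := hTnot
      have heZ : e ∈ ZC := by
        apply subset_closure
        refine ⟨heU, e * c * t, ?_, ?_⟩
        · refine Set.mem_biUnion hez (Set.mem_biUnion hy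
            (Set.mem_biUnion (Finset.mem_coe.2 htT) ⟨e * c, subset_closure ?_, rfl⟩))
          show dist (φ e q) (φ (e * c) y) ≤ d
          have h5 : φ (e * c) y = φ e p := by rw [TMS.phi_mul, hcy]
          rw [h5, hiso e q p, dist_comm]
          exact hpq
        · intro hall
          have h6 := hall k₀ hk₀
          rw [TMS.mem_conj_image] at h6
          apply htnot
          have hrw : t⁻¹ * (c⁻¹ * k₀ * c) * t =
              (e * c * t)⁻¹ * (e * k₀ * e⁻¹) * (e * c * t) := by group
          rw [hrw]; exact h6
      have hqY : q ∈ Y₀ := by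
        refine Set.mem_biUnion hez ⟨e, heZ, ?_⟩
        show φ e⁻¹ (φ e q) = q
        exact TMS.phi_inv φ e q
      exact Set.mem_biUnion hqY (Metric.mem_closedBall.2 hpq)
    exact ((Bornology.isBounded_biUnion hY₀fin).2
      fun q _ => Metric.isBounded_closedBall).subset hsubδ



/-- Lemma 4.4(ii): in the same setting, for all sufficiently large r the set of points
whose r-ball is fixed pointwise by K is almost separated, infinite and with infinite
complement; and if X = G/V with V ≤ U open, this holds for all r ≥ 0. -/
theorem tms_fixed_points_almost_separated {G : Type*} [Group G] [TopologicalSpace G]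
    [IsTopologicalGroup G] [LocallyCompactSpace G] [TotallyDisconnectedSpace G] [T2Space G]
    (hcg : CompactlyGeneratedGrp G)
    {X : Type*} [MetricSpace X] (φ : G →* Equiv.Perm X)
    (hfaith : Function.Injective φ)
    (hiso : IsometricAction φ) (hproper : ProperMetricAction φ)
    (hcocpct : CocompactMetricAction φ) (hgeom : GeometricGSet φ)
    (K U : Subgroup G) (hTMS : IsTMSPair K U)
    (hcore : ∀ x : G, (∀ g : G, g⁻¹ * x * g ∈ U) → x = 1) :
    (∃ r₀ : ℝ, 0 ≤ r₀ ∧ ∀ r : ℝ, r₀ ≤ r →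
      MetricAlmostSep {x : X | ∀ k ∈ K, ∀ y : X, dist x y ≤ r → φ k y = y} ∧
      {x : X | ∀ k ∈ K, ∀ y : X, dist x y ≤ r → φ k y = y}.Infinite ∧
      {x : X | ∀ k ∈ K, ∀ y : X, dist x y ≤ r → φ k y = y}ᶜ.Infinite) ∧
    (∀ V : Subgroup G, IsOpen (V : Set G) → V ≤ U →
      (∃ e : X ≃ (G ⧸ V), ∀ (g : G) (x : X), e (φ g x) = g • e x) →
      ∀ r : ℝ, 0 ≤ r →
        MetricAlmostSep {x : X | ∀ k ∈ K, ∀ y : X, dist x y ≤ r → φ k y = y} ∧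
        {x : X | ∀ k ∈ K, ∀ y : X, dist x y ≤ r → φ k y = y}.Infinite ∧
        {x : X | ∀ k ∈ K, ∀ y : X, dist x y ≤ r → φ k y = y}ᶜ.Infinite) := by
  classical
  constructor
  · obtain ⟨hstab, s, hsfin, hcov⟩ := hgeom
    have hgeom' : GeometricGSet φ := ⟨hstab, s, hsfin, hcov⟩
    have hch : ∀ y : X, ∃ n : ℕ, ((ballStabSG φ y n : Subgroup G) : Set G) ⊆ (U : Set G) :=
      fun y => exists_ballStabSG_le hfaith hiso hproper hgeom' U hTMS.2.1 y
    choose n hn using hch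
    refine ⟨((hsfin.toFinset.sup n : ℕ) : ℝ), Nat.cast_nonneg _, fun r hrr => ?_⟩
    have hr0 : (0 : ℝ) ≤ r := le_trans (Nat.cast_nonneg _) hrr
    refine TMS.main_core φ hfaith hiso hproper hgeom' K U hTMS hcore r hr0 s hsfin ?_
    intro q hq
    obtain ⟨y, hy, g, hgy⟩ := hcov q
    refine ⟨g⁻¹, ?_, ?_⟩
    · show φ g⁻¹ q ∈ s
      rw [← hgy, TMS.phi_inv φ g y]
      exact hy
    · intro k hk
      have hmem : (g⁻¹ * k * g) ∈ ballStabSG φ y ((n y : ℕ) : ℝ) := by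
        intro w hw
        have hd1 : dist q (φ g w) ≤ r := by
          have h0 := hiso g y w
          rw [hgy] at h0
          rw [h0]
          exact hw.trans ((Nat.cast_le.2 (Finset.le_sup (hsfin.mem_toFinset.2 hy))).trans hrr)
        have h2 := hq k hk (φ g w) hd1
        show φ (g⁻¹ * k * g) w = w
        rw [TMS.phi_mul φ (g⁻¹ * k) g, TMS.phi_mul φ g⁻¹ k, h2, TMS.phi_inv φ g w]
      have hU1 := hn y hmem
      show g⁻¹ * k * g⁻¹⁻¹ ∈ (U : Set G)
      rw [inv_inv]
      exact hU1
  · rintro V hVo hVU ⟨e, he⟩ r hr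
    set x₀ : X := e.symm ((1 : G) : G ⧸ V) with hx₀
    have hstab₀ : ∀ h : G, φ h x₀ = x₀ → h ∈ V := by
      intro h hh
      have h1 : e (φ h x₀) = h • e x₀ := he h x₀
      have h2 : e x₀ = ((1 : G) : G ⧸ V) := Equiv.apply_symm_apply e _
      rw [hh, h2] at h1
      have h3 : ((1 : G) : G ⧸ V) = ((h * 1 : G) : G ⧸ V) := h1
      rw [mul_one] at h3
      have h4 := (QuotientGroup.eq (s := V)).1 h3.symm
      rw [mul_one] at h4
      have h5 := V.inv_mem h4
      rwa [inv_inv] at h5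
    refine TMS.main_core φ hfaith hiso hproper hgeom K U hTMS hcore r hr
      {x₀} (Set.finite_singleton x₀) ?_
    intro q hq
    obtain ⟨g, hg⟩ := QuotientGroup.mk_surjective (e q)
    have hgq : φ g⁻¹ q = x₀ := by
      apply e.injective
      have h1 : e (φ g⁻¹ q) = g⁻¹ • e q := he g⁻¹ q
      rw [← hg] at h1
      have h2 : g⁻¹ • ((g : G) : G ⧸ V) = ((1 : G) : G ⧸ V) := by
        show ((g⁻¹ * g : G) : G ⧸ V) = ((1 : G) : G ⧸ V)
        rw [inv_mul_cancel]
      rw [h2] at h1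
      rw [h1, hx₀, Equiv.apply_symm_apply]
    refine ⟨g⁻¹, ?_, ?_⟩
    · show φ g⁻¹ q ∈ ({x₀} : Set X)
      rw [Set.mem_singleton_iff]
      exact hgq
    · intro k hk
      show g⁻¹ * k * g⁻¹⁻¹ ∈ (U : Set G)
      rw [inv_inv]
      apply hVU
      apply hstab₀
      have hgx : φ g x₀ = q := by
        rw [← hgq, TMS.phi_inv' φ g q]
      have hfix : φ k q = q := hq k hk q (by rw [dist_self]; exact hr)
      show φ (g⁻¹ * k * g) x₀ = x₀
      rw [TMS.phi_mul φ (g⁻¹ * k) g, TMS.phi_mul φ g⁻¹ k, hgx, hfix, ← hgx, TMS.phi_inv φ g x₀]
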